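/- arXiv:1810.00809 — 2 statements merged into one kernel-verified Lean document; each statement's English description precedes it below -/
import Mathlib

section
/- Let S : [0,∞) → [0,∞) be continuous with S(0) = 0 and |S(q) − 3q| ≤ C₀ q^{1/2} for all q ≥ 0 and some constant C₀ > 0. Let κ > 0. Let p ∈ C¹([0,∞)) be a nonnegative solution of the TOV equation with ρ = S(p), with p(0) = e^{4κ}/3, satisfying the Buchdahl bound 2m(r)/r ≤ 8/9 for all r > 0, where m(r) = 4π ∫₀^r s² S(p(s)) ds. Let p* ∈ C¹([0,∞)) be a nonnegative solution of the massless TOV equation with p*(0) = e^{4κ}/3, satisfying 2m*(r)/r ≤ 8/9 for all r > 0, where m*(r) = 12π ∫₀^r s² p*(s) ds. Then there is a constant C > 0, depending only on C₀ (in particular independent of κ and r), such that for all r ≥ 0: |p(r) − p*(r)| ≤ C e^{6κ} (r² + e^{4κ} r⁴) exp( C (e^{4κ} r² + e^{8κ} r⁴) ). -/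
open MeasureTheory

noncomputable section

/-- The quasi-local mass `m(r) = 4π ∫₀^r s² S(p(s)) ds` associated with a pressure profile `p`
and inverse equation of state `ρ = S(p)`. -/
def tovMass (S p : ℝ → ℝ) (r : ℝ) : ℝ :=
  4 * Real.pi * ∫ s in (0:ℝ)..r, s ^ 2 * S (p s)

/-- `p` is a nonnegative `C¹([0,∞))` solution of the TOV equation with equation of state
`ρ = S(p)`. -/
def SolvesTOV (S p : ℝ → ℝ) : Prop :=
  ContDiffOn ℝ 1 p (Set.Ici 0) ∧ (∀ r : ℝ, 0 ≤ r → 0 ≤ p r) ∧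
  (∀ r : ℝ, 0 < r → 2 * tovMass S p r / r < 1) ∧
  (∀ r : ℝ, 0 < r →
    deriv p r = -(S (p r) + p r) / (1 - 2 * tovMass S p r / r) *
      (tovMass S p r / r ^ 2 + 4 * Real.pi * r * p r))

lemma intInt_of_contOn {F : ℝ → ℝ} {t : ℝ} (ht : 0 ≤ t)
    (h : ContinuousOn F (Set.Icc 0 t)) : IntervalIntegrable F volume 0 t :=
  (by rwa [Set.uIcc_of_le ht] : ContinuousOn F (Set.uIcc 0 t)).intervalIntegrable

lemma tovMass_bounds {S p : ℝ → ℝ} {r M : ℝ} (hr : 0 ≤ r)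
    (hcont : ContinuousOn (fun s => s ^ 2 * S (p s)) (Set.Icc 0 r))
    (h0 : ∀ s ∈ Set.Icc (0:ℝ) r, 0 ≤ S (p s))
    (hM : ∀ s ∈ Set.Icc (0:ℝ) r, S (p s) ≤ M) :
    0 ≤ tovMass S p r ∧ tovMass S p r ≤ 4 * Real.pi * (M * r ^ 3 / 3) := by
  constructor
  · apply mul_nonneg (by positivity)
    apply intervalIntegral.integral_nonneg hr
    intro s hs
    exact mul_nonneg (by positivity) (h0 s hs)
  · apply mul_le_mul_of_nonneg_left _ (by positivity : (0:ℝ) ≤ 4 * Real.pi)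
    have h1 : IntervalIntegrable (fun s => s ^ 2 * S (p s)) volume 0 r :=
      intInt_of_contOn hr hcont
    have h2 : IntervalIntegrable (fun s : ℝ => M * s ^ 2) volume 0 r :=
      (continuous_const.mul (continuous_pow 2)).intervalIntegrable 0 r
    calc ∫ s in (0:ℝ)..r, s ^ 2 * S (p s) ≤ ∫ s in (0:ℝ)..r, M * s ^ 2 := by
          apply intervalIntegral.integral_mono_on hr h1 h2
          intro s hs
          rw [mul_comm]
          exact mul_le_mul_of_nonneg_right (hM s hs) (by positivity)
      _ = M * r ^ 3 / 3 := by
          rw [intervalIntegral.integral_const_mul, integral_pow]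
          ring

lemma tov_pressure_le {S p : ℝ → ℝ} (hSnn : ∀ q : ℝ, 0 ≤ q → 0 ≤ S q)
    (hsol : SolvesTOV S p) : ∀ r : ℝ, 0 ≤ r → p r ≤ p 0 := by
  obtain ⟨hC1, hpn, hm, hode⟩ := hsol
  have hanti : AntitoneOn p (Set.Ici 0) := by
    apply antitoneOn_of_deriv_nonpos (convex_Ici 0) hC1.continuousOn
    · rw [interior_Ici]
      intro x hx
      exact ((hC1.differentiableOn one_ne_zero).differentiableAt
        (Ici_mem_nhds hx)).differentiableWithinAt
    · rw [interior_Ici]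
      intro x hx
      rw [hode x hx]
      have hm0 : 0 ≤ tovMass S p x := by
        apply mul_nonneg (by positivity)
        apply intervalIntegral.integral_nonneg hx.le
        intro s hs
        exact mul_nonneg (by positivity) (hSnn _ (hpn s hs.1))
      have hD : 0 < 1 - 2 * tovMass S p x / x := sub_pos.2 (hm x hx)
      have hQ : 0 ≤ S (p x) + p x := add_nonneg (hSnn _ (hpn x hx.le)) (hpn x hx.le)
      have hB : 0 ≤ tovMass S p x / x ^ 2 + 4 * Real.pi * x * p x := by
        apply add_nonneg (div_nonneg hm0 (by positivity : (0:ℝ) ≤ x ^ 2))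
        exact mul_nonneg (mul_nonneg (by positivity) hx.le) (hpn x hx.le)
      apply mul_nonpos_of_nonpos_of_nonneg _ hB
      apply div_nonpos_of_nonpos_of_nonneg _ hD.le
      linarith
  intro r hr
  exact hanti (Set.self_mem_Ici) hr hr

set_option maxHeartbeats 2000000 in
/-- Comparison of the massive TOV solution with central pressure `e^{4κ}/3`
with the massless one with the same central pressure: there is a constant `C > 0` depending
only on `C₀` such that
`|p(r) − p*(r)| ≤ C e^{6κ}(r² + e^{4κ}r⁴) exp(C(e^{4κ}r² + e^{8κ}r⁴))` for all `r ≥ 0`. -/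
theorem stmt6
    (S : ℝ → ℝ) (C₀ : ℝ) (hC₀ : 0 < C₀)
    (hScont : ContinuousOn S (Set.Ici 0)) (hS0 : S 0 = 0)
    (hSnonneg : ∀ q : ℝ, 0 ≤ q → 0 ≤ S q)
    (hS : ∀ q : ℝ, 0 ≤ q → |S q - 3 * q| ≤ C₀ * Real.sqrt q) :
    ∃ C : ℝ, 0 < C ∧ ∀ κ : ℝ, 0 < κ → ∀ p pstar : ℝ → ℝ,
      SolvesTOV S p → p 0 = Real.exp (4 * κ) / 3 →
      (∀ r : ℝ, 0 < r → 2 * tovMass S p r / r ≤ 8 / 9) →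
      SolvesTOV (fun q => 3 * q) pstar → pstar 0 = Real.exp (4 * κ) / 3 →
      (∀ r : ℝ, 0 < r → 2 * tovMass (fun q => 3 * q) pstar r / r ≤ 8 / 9) →
      ∀ r : ℝ, 0 ≤ r →
        |p r - pstar r| ≤
          C * Real.exp (6 * κ) * (r ^ 2 + Real.exp (4 * κ) * r ^ 4) *
            Real.exp (C * (Real.exp (4 * κ) * r ^ 2 + Real.exp (8 * κ) * r ^ 4)) := by
  refine ⟨10 ^ 7 * (C₀ + 1) ^ 3 * Real.exp (10 ^ 7 * (C₀ + 1)), by positivity, ?_⟩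
  intro κ hκ p q hp hp0 hpB hq hq0 hqB r hr
  set C : ℝ := 10 ^ 7 * (C₀ + 1) ^ 3 * Real.exp (10 ^ 7 * (C₀ + 1)) with hCdef
  rcases eq_or_lt_of_le hr with hr0 | hR
  · rw [← hr0, hp0, hq0]
    simp
  -- now 0 < r
  -- basic scalars
  have hpi4 : Real.pi ≤ 4 := Real.pi_le_four
  have hpi0 : (0:ℝ) < Real.pi := Real.pi_pos
  set E2 : ℝ := Real.exp (2 * κ) with hE2
  set E4 : ℝ := Real.exp (4 * κ) with hE4
  set E8 : ℝ := Real.exp (8 * κ) with hE8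
  have hE2pos : 0 < E2 := Real.exp_pos _
  have hE4pos : 0 < E4 := Real.exp_pos _
  have hE8pos : 0 < E8 := Real.exp_pos _
  have hE2one : 1 ≤ E2 := Real.one_le_exp (by linarith)
  have hE4one : 1 ≤ E4 := Real.one_le_exp (by linarith)
  have hE24 : E2 ≤ E4 := Real.exp_le_exp.2 (by linarith)
  have hE4sq : E4 = E2 ^ 2 := by rw [hE2, hE4, sq, ← Real.exp_add]; ring_nf
  have he6 : Real.exp (6 * κ) = E2 * E4 := by rw [hE2, hE4, ← Real.exp_add]; ring_nf
  set A : ℝ := C₀ * E2 with hA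
  set M : ℝ := (C₀ + 1) * E4 with hM
  have hA0 : 0 ≤ A := mul_nonneg hC₀.le hE2pos.le
  have hM0 : 0 < M := mul_pos (by linarith) hE4pos
  have hM1 : 1 ≤ M := by
    have h : (1:ℝ) * 1 ≤ (C₀ + 1) * E4 :=
      mul_le_mul (by linarith) hE4one zero_le_one (by linarith)
    rw [hM]; linarith
  set lam : ℝ := (C₀ + 1) * (E4 * r + E2) with hlam
  have hlampos : 0 < lam := by
    apply mul_pos (by linarith)
    have : 0 ≤ E4 * r := mul_nonneg hE4pos.le hr
    linarith
  set K : ℝ := 4 * 10 ^ 6 * lam with hK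
  have hKpos : 0 < K := by positivity
  set eps : ℝ := 10 ^ 6 * A * (M * r + M ^ 2 * r ^ 3) with heps
  have heps0 : 0 ≤ eps := by
    apply mul_nonneg (by positivity)
    have h1 : 0 ≤ M * r := mul_nonneg hM0.le hr
    have h2 : 0 ≤ M ^ 2 * r ^ 3 := by positivity
    linarith
  -- continuity & basic pressure bounds
  have hpc : ContinuousOn p (Set.Ici 0) := hp.1.continuousOn
  have hqc : ContinuousOn q (Set.Ici 0) := hq.1.continuousOn
  have hpn := hp.2.1
  have hqn := hq.2.1
  have hq3nn : ∀ x : ℝ, 0 ≤ x → 0 ≤ (fun y : ℝ => 3 * y) x := fun x hx => by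
    simpa using mul_nonneg (by norm_num : (0:ℝ) ≤ 3) hx
  have hple : ∀ t : ℝ, 0 ≤ t → p t ≤ E4 / 3 := by
    intro t ht
    have := tov_pressure_le hSnonneg hp t ht
    rwa [hp0] at this
  have hqle : ∀ t : ℝ, 0 ≤ t → q t ≤ E4 / 3 := by
    intro t ht
    have := tov_pressure_le hq3nn hq t ht
    rwa [hq0] at this
  have hsqrt : ∀ t : ℝ, 0 ≤ t → Real.sqrt (p t) ≤ E2 := by
    intro t ht
    have h1 : p t ≤ E2 ^ 2 := by
      have := hple t ht; rw [hE4sq] at this; linarith [sq_nonneg E2]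
    calc Real.sqrt (p t) ≤ Real.sqrt (E2 ^ 2) := Real.sqrt_le_sqrt h1
      _ = E2 := Real.sqrt_sq hE2pos.le
  have hSpA : ∀ t : ℝ, 0 ≤ t → |S (p t) - 3 * p t| ≤ A := fun t ht =>
    (hS _ (hpn t ht)).trans (mul_le_mul_of_nonneg_left (hsqrt t ht) hC₀.le)
  have hSpM : ∀ t : ℝ, 0 ≤ t → S (p t) ≤ M := by
    intro t ht
    have h1 := abs_le.1 (hSpA t ht)
    have h2 := hple t ht
    have h3 : C₀ * E2 ≤ C₀ * E4 := mul_le_mul_of_nonneg_left hE24 hC₀.le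
    rw [hM]; rw [hA] at h1; nlinarith [h1, h2, h3]
  have hSq3M : ∀ t : ℝ, 0 ≤ t → 3 * q t ≤ M := by
    intro t ht
    have h2 := hqle t ht
    rw [hM]; linarith [mul_nonneg hC₀.le hE4pos.le]
  -- integrability of integrands
  have hIp : ∀ t : ℝ, 0 ≤ t → ContinuousOn (fun s => s ^ 2 * S (p s)) (Set.Icc 0 t) := by
    intro t ht
    apply ((continuous_pow 2).continuousOn).mul
    exact hScont.comp (hpc.mono Set.Icc_subset_Ici_self) (fun s hs => hpn s hs.1)
  have hIq : ∀ t : ℝ, 0 ≤ t → ContinuousOn (fun s => s ^ 2 * (3 * q s)) (Set.Icc 0 t) := by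
    intro t ht
    apply ((continuous_pow 2).continuousOn).mul
    exact (continuousOn_const.mul (hqc.mono Set.Icc_subset_Ici_self))
  -- mass bounds
  have hmassp : ∀ t : ℝ, 0 ≤ t →
      0 ≤ tovMass S p t ∧ tovMass S p t ≤ 4 * Real.pi * (M * t ^ 3 / 3) :=
    fun t ht => tovMass_bounds ht (hIp t ht) (fun s hs => hSnonneg _ (hpn s hs.1))
      (fun s hs => hSpM s hs.1)
  have hmassq : ∀ t : ℝ, 0 ≤ t →
      0 ≤ tovMass (fun y : ℝ => 3 * y) q t ∧
        tovMass (fun y : ℝ => 3 * y) q t ≤ 4 * Real.pi * (M * t ^ 3 / 3) :=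
    fun t ht => tovMass_bounds ht (hIq t ht) (fun s hs => hq3nn _ (hqn s hs.1))
      (fun s hs => hSq3M s hs.1)
  -- shell factor bounds
  have hDpb : ∀ t : ℝ, 0 < t → 1 / 9 ≤ 1 - 2 * tovMass S p t / t ∧
      1 - 2 * tovMass S p t / t ≤ 1 := by
    intro t ht
    refine ⟨by have := hpB t ht; linarith, ?_⟩
    have h0 := (hmassp t ht.le).1
    have : 0 ≤ 2 * tovMass S p t / t := div_nonneg (by linarith) ht.le
    linarith
  have hDqb : ∀ t : ℝ, 0 < t → 1 / 9 ≤ 1 - 2 * tovMass (fun y : ℝ => 3 * y) q t / t ∧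
      1 - 2 * tovMass (fun y : ℝ => 3 * y) q t / t ≤ 1 := by
    intro t ht
    refine ⟨by have := hqB t ht; linarith, ?_⟩
    have h0 := (hmassq t ht.le).1
    have : 0 ≤ 2 * tovMass (fun y : ℝ => 3 * y) q t / t := div_nonneg (by linarith) ht.le
    linarith
  -- the difference function and its integral
  have hgcont : ContinuousOn (fun s => p s - q s) (Set.Ici 0) := hpc.sub hqc
  have hgInt : ∀ t : ℝ, 0 ≤ t →
      IntervalIntegrable (fun s => |p s - q s|) volume 0 t :=
    fun t ht => intInt_of_contOn ht (hgcont.mono Set.Icc_subset_Ici_self).abs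
  have hw0 : ∀ t : ℝ, 0 ≤ t → 0 ≤ ∫ s in (0:ℝ)..t, |p s - q s| :=
    fun t ht => intervalIntegral.integral_nonneg ht (fun s _ => abs_nonneg _)
  have hwle : ∀ t : ℝ, 0 ≤ t → (∫ s in (0:ℝ)..t, |p s - q s|) ≤ E4 * t := by
    intro t ht
    have hb : ∀ s ∈ Set.Icc (0:ℝ) t, |p s - q s| ≤ E4 := by
      intro s hs
      have h1 := hpn s hs.1; have h2 := hqn s hs.1
      have h3 := hple s hs.1; have h4 := hqle s hs.1
      rw [abs_le]; constructor <;> linarith [hE4pos.le]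
    calc (∫ s in (0:ℝ)..t, |p s - q s|) ≤ ∫ _s in (0:ℝ)..t, E4 :=
          intervalIntegral.integral_mono_on ht (hgInt t ht) intervalIntegrable_const hb
      _ = E4 * t := by simp [intervalIntegral.integral_const]; ring
  -- mass difference bound
  have hmdiff : ∀ t : ℝ, 0 ≤ t →
      |tovMass S p t - tovMass (fun y : ℝ => 3 * y) q t| ≤
        (6 * A * t + 48 * ∫ s in (0:ℝ)..t, |p s - q s|) * t ^ 2 := by
    intro t ht
    have hI1 : IntervalIntegrable (fun s => s ^ 2 * S (p s)) volume 0 t :=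
      intInt_of_contOn ht (hIp t ht)
    have hI2 : IntervalIntegrable (fun s => s ^ 2 * (3 * q s)) volume 0 t :=
      intInt_of_contOn ht (hIq t ht)
    have hI3 : IntervalIntegrable (fun s => A * s ^ 2 + 3 * t ^ 2 * |p s - q s|) volume 0 t :=
      ((continuous_const.mul (continuous_pow 2)).intervalIntegrable 0 t).add
        ((hgInt t ht).const_mul _)
    have hkey : tovMass S p t - tovMass (fun y : ℝ => 3 * y) q t
        = 4 * Real.pi * ∫ s in (0:ℝ)..t, (s ^ 2 * S (p s) - s ^ 2 * (3 * q s)) := by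
      rw [intervalIntegral.integral_sub hI1 hI2]
      simp only [tovMass]
      ring
    rw [hkey, abs_mul, abs_of_nonneg (by positivity : (0:ℝ) ≤ 4 * Real.pi)]
    have hintadd : (∫ s in (0:ℝ)..t, (A * s ^ 2 + 3 * t ^ 2 * |p s - q s|))
        = A * t ^ 3 / 3 + 3 * t ^ 2 * ∫ s in (0:ℝ)..t, |p s - q s| := by
      rw [intervalIntegral.integral_add (f := fun s : ℝ => A * s ^ 2)
        (g := fun s : ℝ => 3 * t ^ 2 * |p s - q s|)
        ((continuous_const.mul (continuous_pow 2)).intervalIntegrable 0 t)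
        ((hgInt t ht).const_mul _), intervalIntegral.integral_const_mul,
        intervalIntegral.integral_const_mul, integral_pow]
      ring
    have habs : |∫ s in (0:ℝ)..t, (s ^ 2 * S (p s) - s ^ 2 * (3 * q s))| ≤
        A * t ^ 3 / 3 + 3 * t ^ 2 * ∫ s in (0:ℝ)..t, |p s - q s| := by
      have h1 : |∫ s in (0:ℝ)..t, (s ^ 2 * S (p s) - s ^ 2 * (3 * q s))| ≤
          ∫ s in (0:ℝ)..t, |s ^ 2 * S (p s) - s ^ 2 * (3 * q s)| :=
        intervalIntegral.abs_integral_le_integral_abs ht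
      have h2 : (∫ s in (0:ℝ)..t, |s ^ 2 * S (p s) - s ^ 2 * (3 * q s)|) ≤
          ∫ s in (0:ℝ)..t, (A * s ^ 2 + 3 * t ^ 2 * |p s - q s|) := by
        apply intervalIntegral.integral_mono_on ht (hI1.sub hI2).abs hI3
        intro s hs
        have e1 : s ^ 2 * S (p s) - s ^ 2 * (3 * q s)
            = s ^ 2 * ((S (p s) - 3 * p s) + 3 * (p s - q s)) := by ring
        rw [e1, abs_mul, abs_of_nonneg (by positivity : (0:ℝ) ≤ s ^ 2)]
        have h3 : |S (p s) - 3 * p s + 3 * (p s - q s)| ≤ A + 3 * |p s - q s| := by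
          refine (abs_add_le _ _).trans ?_
          have h4 : |3 * (p s - q s)| = 3 * |p s - q s| := by
            rw [abs_mul]; norm_num
          rw [h4]
          linarith [hSpA s hs.1]
        have hs2 : s ^ 2 ≤ t ^ 2 := pow_le_pow_left₀ hs.1 hs.2 2
        have habs0 : (0:ℝ) ≤ |p s - q s| := abs_nonneg _
        have k1 := mul_le_mul_of_nonneg_left h3 (sq_nonneg s)
        have k2 := mul_nonneg habs0 (sub_nonneg.2 hs2)
        nlinarith [k1, k2]
      rw [hintadd] at h2
      linarith
    have hW := hw0 t ht
    have hX : 0 ≤ A * t ^ 3 / 3 + 3 * t ^ 2 * ∫ s in (0:ℝ)..t, |p s - q s| := by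
      have h5 : 0 ≤ A * t ^ 3 / 3 := by
        have : 0 ≤ t ^ 3 := by positivity
        have := mul_nonneg hA0 this
        linarith
      have h6 : 0 ≤ 3 * t ^ 2 * ∫ s in (0:ℝ)..t, |p s - q s| :=
        mul_nonneg (by positivity) hW
      linarith
    calc 4 * Real.pi * |∫ s in (0:ℝ)..t, (s ^ 2 * S (p s) - s ^ 2 * (3 * q s))|
        ≤ 4 * Real.pi * (A * t ^ 3 / 3 + 3 * t ^ 2 * ∫ s in (0:ℝ)..t, |p s - q s|) :=
          mul_le_mul_of_nonneg_left habs (by positivity)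
      _ ≤ 16 * (A * t ^ 3 / 3 + 3 * t ^ 2 * ∫ s in (0:ℝ)..t, |p s - q s|) :=
          mul_le_mul_of_nonneg_right (by linarith) hX
      _ ≤ (6 * A * t + 48 * ∫ s in (0:ℝ)..t, |p s - q s|) * t ^ 2 := by
          linarith [mul_nonneg hA0 (by positivity : (0:ℝ) ≤ t ^ 3),
            mul_nonneg (sq_nonneg t) hW]

  -- key derivative-difference estimate
  have hkeyder : ∀ t : ℝ, 0 < t → t ≤ r →
      |deriv p t - deriv q t| ≤
        1000000 * (A * (M * t + M ^ 2 * t ^ 3)) + 1000000 * (M * t) * |p t - q t| +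
          1000000 * ((M ^ 2 * t ^ 2 + M) * ∫ s in (0:ℝ)..t, |p s - q s|) := by
    intro t ht htr
    have hode_p := hp.2.2.2 t ht
    have hode_q : deriv q t = -(3 * q t + q t) /
        (1 - 2 * tovMass (fun y : ℝ => 3 * y) q t / t) *
        (tovMass (fun y : ℝ => 3 * y) q t / t ^ 2 + 4 * Real.pi * t * q t) :=
      hq.2.2.2 t ht
    obtain ⟨hmp0, hmp1⟩ := hmassp t ht.le
    obtain ⟨hmq0, hmq1⟩ := hmassq t ht.le
    obtain ⟨hDp1, hDp2⟩ := hDpb t ht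
    obtain ⟨hDq1, hDq2⟩ := hDqb t ht
    have hmd := hmdiff t ht.le
    have hWnn := hw0 t ht.le
    have hpleM : p t ≤ M := by
      have := hple t ht.le; rw [hM]; linarith [mul_nonneg hC₀.le hE4pos.le]
    have hqleM : q t ≤ M := by
      have := hqle t ht.le; rw [hM]; linarith [mul_nonneg hC₀.le hE4pos.le]
    set mp := tovMass S p t with hmpe
    set mq := tovMass (fun y : ℝ => 3 * y) q t with hmqe
    set W := ∫ s in (0:ℝ)..t, |p s - q s| with hWe
    set G := |p t - q t| with hGe
    have hGnn : 0 ≤ G := abs_nonneg _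
    set Dp := 1 - 2 * mp / t with hDpe
    set Dq := 1 - 2 * mq / t with hDqe
    set Qp := S (p t) + p t with hQpe
    set Qq := 3 * q t + q t with hQqe
    set Bp := mp / t ^ 2 + 4 * Real.pi * t * p t with hBpe
    set Bq := mq / t ^ 2 + 4 * Real.pi * t * q t with hBqe
    have hDppos : 0 < Dp := lt_of_lt_of_le (by norm_num) hDp1
    have hDqpos : 0 < Dq := lt_of_lt_of_le (by norm_num) hDq1
    have hu9 : Dp⁻¹ ≤ 9 := by
      have h := inv_anti₀ (by norm_num : (0:ℝ) < 1 / 9) hDp1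
      norm_num at h; exact h
    have hv9 : Dq⁻¹ ≤ 9 := by
      have h := inv_anti₀ (by norm_num : (0:ℝ) < 1 / 9) hDq1
      norm_num at h; exact h
    have hu0 : 0 ≤ Dp⁻¹ := inv_nonneg.2 hDppos.le
    have hv0 : 0 ≤ Dq⁻¹ := inv_nonneg.2 hDqpos.le
    have hQp0 : 0 ≤ Qp := add_nonneg (hSnonneg _ (hpn t ht.le)) (hpn t ht.le)
    have hQp2 : Qp ≤ 2 * M := by
      have h1 := hSpM t ht.le
      rw [hQpe]; linarith
    have hQq0 : 0 ≤ Qq := by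
      have := hqn t ht.le; rw [hQqe]; linarith
    have hQq2 : Qq ≤ 2 * M := by
      have h1 := hSq3M t ht.le; rw [hQqe]; linarith
    have ht2 : (0:ℝ) < t ^ 2 := pow_pos ht 2
    have hBp0 : 0 ≤ Bp :=
      add_nonneg (div_nonneg hmp0 ht2.le)
        (mul_nonneg (mul_nonneg (by positivity) ht.le) (hpn t ht.le))
    have hBq0 : 0 ≤ Bq :=
      add_nonneg (div_nonneg hmq0 ht2.le)
        (mul_nonneg (mul_nonneg (by positivity) ht.le) (hqn t ht.le))
    have hMt : 0 ≤ M * t := mul_nonneg hM0.le ht.le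
    have hpiMt := mul_le_mul_of_nonneg_right hpi4 hMt
    have hBpu : Bp ≤ 24 * M * t := by
      have h1 : mp / t ^ 2 ≤ 4 * Real.pi * M * t / 3 := by
        rw [div_le_iff₀ ht2]
        linarith [hmp1]
      have h2 : 4 * Real.pi * t * p t ≤ 4 * Real.pi * t * M :=
        mul_le_mul_of_nonneg_left hpleM (mul_nonneg (by positivity) ht.le)
      rw [hBpe]
      linarith [hpiMt, h1, h2]
    have hBqu : Bq ≤ 24 * M * t := by
      have h1 : mq / t ^ 2 ≤ 4 * Real.pi * M * t / 3 := by
        rw [div_le_iff₀ ht2]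
        linarith [hmq1]
      have h2 : 4 * Real.pi * t * q t ≤ 4 * Real.pi * t * M :=
        mul_le_mul_of_nonneg_left hqleM (mul_nonneg (by positivity) ht.le)
      rw [hBqe]
      linarith [hpiMt, h1, h2]
    -- the decomposition identity
    have hid : deriv p t - deriv q t =
        (Qq - Qp) * Dq⁻¹ * Bq + Qp * ((Dp - Dq) * Dp⁻¹ * Dq⁻¹) * Bq
          + Qp * Dp⁻¹ * (Bq - Bp) := by
      rw [hode_p, hode_q]
      field_simp
      ring
    -- bounds for the three pieces
    have hQd : |Qq - Qp| ≤ A + 4 * G := by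
      have e : 3 * p t - S (p t) + 4 * (q t - p t) = Qq - Qp := by
        rw [hQpe, hQqe]; ring
      have h1 := abs_add_le (3 * p t - S (p t)) (4 * (q t - p t))
      rw [e, abs_sub_comm (3 * p t) (S (p t))] at h1
      have h4 : |4 * (q t - p t)| = 4 * G := by
        rw [abs_mul, hGe, abs_sub_comm (p t) (q t)]; norm_num
      rw [h4] at h1
      linarith [hSpA t ht.le]
    have hDd : |Dp - Dq| ≤ (12 * A * t + 96 * W) * t := by
      have e : Dp - Dq = 2 / t * (mq - mp) := by
        rw [hDpe, hDqe]; field_simp; ring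
      rw [e, abs_mul, abs_of_nonneg (div_nonneg (by norm_num : (0:ℝ) ≤ 2) ht.le)]
      have h5 : |mq - mp| ≤ (6 * A * t + 48 * W) * t ^ 2 := by
        rw [abs_sub_comm]; exact hmd
      calc 2 / t * |mq - mp| ≤ 2 / t * ((6 * A * t + 48 * W) * t ^ 2) :=
            mul_le_mul_of_nonneg_left h5 (div_nonneg (by norm_num) ht.le)
        _ = (12 * A * t + 96 * W) * t := by field_simp; ring
    have hBd : |Bq - Bp| ≤ (6 * A * t + 48 * W) + 16 * t * G := by
      have e : Bq - Bp = (mq - mp) / t ^ 2 + 4 * Real.pi * t * (q t - p t) := by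
        rw [hBqe, hBpe]; ring
      rw [e]
      refine (abs_add_le _ _).trans ?_
      have h6 : |(mq - mp) / t ^ 2| ≤ 6 * A * t + 48 * W := by
        rw [abs_div, abs_of_nonneg ht2.le, div_le_iff₀ ht2, abs_sub_comm]
        exact hmd
      have h7 : |4 * Real.pi * t * (q t - p t)| ≤ 16 * t * G := by
        rw [abs_mul, abs_of_nonneg (mul_nonneg (by positivity) ht.le),
          abs_sub_comm (q t) (p t), ← hGe]
        linarith [mul_le_mul_of_nonneg_right (mul_le_mul_of_nonneg_right hpi4 ht.le)
          hGnn, mul_nonneg ht.le hGnn]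
      linarith
    have hmid0 : 0 ≤ (12 * A * t + 96 * W) * t := by
      have := mul_nonneg hA0 ht.le
      have h8 : 0 ≤ 12 * A * t + 96 * W := by linarith
      exact mul_nonneg h8 ht.le
    have hT1 : |(Qq - Qp) * Dq⁻¹ * Bq| ≤ (A + 4 * G) * 9 * (24 * M * t) := by
      rw [abs_mul, abs_mul]
      have hb2 : |Dq⁻¹| ≤ 9 := by rw [abs_of_nonneg hv0]; exact hv9
      have hb3 : |Bq| ≤ 24 * M * t := by rw [abs_of_nonneg hBq0]; exact hBqu
      have hnn : 0 ≤ A + 4 * G := by linarith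
      exact mul_le_mul (mul_le_mul hQd hb2 (abs_nonneg _) hnn) hb3 (abs_nonneg _)
        (mul_nonneg hnn (by norm_num))
    have hT2 : |Qp * ((Dp - Dq) * Dp⁻¹ * Dq⁻¹) * Bq| ≤
        2 * M * ((12 * A * t + 96 * W) * t * 81) * (24 * M * t) := by
      rw [abs_mul, abs_mul]
      have hb2 : |(Dp - Dq) * Dp⁻¹ * Dq⁻¹| ≤ (12 * A * t + 96 * W) * t * 81 := by
        rw [abs_mul, abs_mul, abs_of_nonneg hu0, abs_of_nonneg hv0]
        calc |Dp - Dq| * Dp⁻¹ * Dq⁻¹ ≤ (12 * A * t + 96 * W) * t * 9 * 9 := by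
              apply mul_le_mul (mul_le_mul hDd hu9 hu0 hmid0) hv9 hv0
                (mul_nonneg hmid0 (by norm_num))
          _ = (12 * A * t + 96 * W) * t * 81 := by ring
      have hb1 : |Qp| ≤ 2 * M := by rw [abs_of_nonneg hQp0]; exact hQp2
      have hb3 : |Bq| ≤ 24 * M * t := by rw [abs_of_nonneg hBq0]; exact hBqu
      have hmid81 : 0 ≤ (12 * A * t + 96 * W) * t * 81 := by positivity
      exact mul_le_mul (mul_le_mul hb1 hb2 (abs_nonneg _) (by linarith)) hb3
        (abs_nonneg _) (mul_nonneg (by linarith) hmid81)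
    have hT3 : |Qp * Dp⁻¹ * (Bq - Bp)| ≤
        2 * M * 9 * ((6 * A * t + 48 * W) + 16 * t * G) := by
      rw [abs_mul, abs_mul]
      have hb1 : |Qp| ≤ 2 * M := by rw [abs_of_nonneg hQp0]; exact hQp2
      have hb2 : |Dp⁻¹| ≤ 9 := by rw [abs_of_nonneg hu0]; exact hu9
      exact mul_le_mul (mul_le_mul hb1 hb2 (abs_nonneg _) (by linarith)) hBd
        (abs_nonneg _) (mul_nonneg (mul_nonneg (by norm_num) hM0.le) (by norm_num))
    -- combine
    have hsum : |deriv p t - deriv q t| ≤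
        (A + 4 * G) * 9 * (24 * M * t)
          + 2 * M * ((12 * A * t + 96 * W) * t * 81) * (24 * M * t)
          + 2 * M * 9 * ((6 * A * t + 48 * W) + 16 * t * G) := by
      rw [hid]
      calc |(Qq - Qp) * Dq⁻¹ * Bq + Qp * ((Dp - Dq) * Dp⁻¹ * Dq⁻¹) * Bq
            + Qp * Dp⁻¹ * (Bq - Bp)|
          ≤ |(Qq - Qp) * Dq⁻¹ * Bq| + |Qp * ((Dp - Dq) * Dp⁻¹ * Dq⁻¹) * Bq|
            + |Qp * Dp⁻¹ * (Bq - Bp)| := abs_add_three _ _ _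
        _ ≤ _ := by linarith
    have hn1 : 0 ≤ A * M * t := mul_nonneg (mul_nonneg hA0 hM0.le) ht.le
    have hn2 : 0 ≤ A * M ^ 2 * t ^ 3 := by
      have : (0:ℝ) ≤ M ^ 2 := sq_nonneg M
      have h9 : (0:ℝ) ≤ t ^ 3 := by positivity
      exact mul_nonneg (mul_nonneg hA0 this) h9
    have hn3 : 0 ≤ M * t * G := mul_nonneg hMt hGnn
    have hn4 : 0 ≤ M ^ 2 * t ^ 2 * W := mul_nonneg (mul_nonneg (sq_nonneg M) ht2.le) hWnn
    have hn5 : 0 ≤ M * W := mul_nonneg hM0.le hWnn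
    linarith [hsum, hn1, hn2, hn3, hn4, hn5]

  -- Gronwall on [a, r]
  have hgron : ∀ a : ℝ, 0 < a → a < r →
      |p r - q r| ≤
        (|p a - q a| + lam * (E4 * a)) * Real.exp (K * r) +
          eps / K * (Real.exp (K * r) - 1) := by
    intro a ha har
    have hInt0 : ∀ x : ℝ, 0 < x → IntervalIntegrable (fun s => |p s - q s|) volume 0 x :=
      fun x hx => hgInt x hx.le
    have habscont : ContinuousOn (fun s => |p s - q s|) (Set.Ioi 0) :=
      (hgcont.mono Set.Ioi_subset_Ici_self).abs
    -- derivative of the primitive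
    have hwder : ∀ x : ℝ, 0 < x →
        HasDerivAt (fun u => ∫ s in (0:ℝ)..u, |p s - q s|) (|p x - q x|) x := by
      intro x hx
      apply intervalIntegral.integral_hasDerivAt_right (hInt0 x hx)
      · exact habscont.stronglyMeasurableAtFilter isOpen_Ioi x hx
      · exact (hgcont.continuousAt (Ici_mem_nhds hx)).abs
    have hpder : ∀ x : ℝ, 0 < x → HasDerivAt p (deriv p x) x := fun x hx =>
      ((hp.1.differentiableOn one_ne_zero).differentiableAt (Ici_mem_nhds hx)).hasDerivAt
    have hqder : ∀ x : ℝ, 0 < x → HasDerivAt q (deriv q x) x := fun x hx =>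
      ((hq.1.differentiableOn one_ne_zero).differentiableAt (Ici_mem_nhds hx)).hasDerivAt
    have key := norm_le_gronwallBound_of_norm_deriv_right_le
      (f := fun x : ℝ => (p x - q x, lam * ∫ s in (0:ℝ)..x, |p s - q s|))
      (f' := fun x : ℝ => (deriv p x - deriv q x, lam * |p x - q x|))
      (δ := ‖(p a - q a, lam * ∫ s in (0:ℝ)..a, |p s - q s|)‖)
      (K := K) (ε := eps) (a := a) (b := r)
      (by -- continuity
        intro x hx
        have hx0 : 0 < x := lt_of_lt_of_le ha hx.1
        have h1 : ContinuousAt p x := hpc.continuousAt (Ici_mem_nhds hx0)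
        have h2 : ContinuousAt q x := hqc.continuousAt (Ici_mem_nhds hx0)
        have h3 : ContinuousAt (fun u => ∫ s in (0:ℝ)..u, |p s - q s|) x :=
          (hwder x hx0).continuousAt
        exact ((h1.sub h2).prodMk ((continuousAt_const.mul h3))).continuousWithinAt)
      (by -- derivative
        intro x hx
        have hx0 : 0 < x := lt_of_lt_of_le ha hx.1
        exact (HasDerivAt.prodMk ((hpder x hx0).sub (hqder x hx0))
          ((hwder x hx0).const_mul lam)).hasDerivWithinAt)
      le_rfl
      (by -- the bound
        intro x hx
        have hx0 : 0 < x := lt_of_lt_of_le ha hx.1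
        have hxr : x ≤ r := hx.2.le
        have hW0x := hw0 x hx0.le
        have hlamW : ‖(p x - q x, lam * ∫ s in (0:ℝ)..x, |p s - q s|)‖
            = max |p x - q x| (lam * ∫ s in (0:ℝ)..x, |p s - q s|) := by
          rw [Prod.norm_def, Real.norm_eq_abs, Real.norm_eq_abs,
            abs_of_nonneg (mul_nonneg hlampos.le hW0x)]
        rw [Prod.norm_def, Real.norm_eq_abs, Real.norm_eq_abs, hlamW]
        set N := max |p x - q x| (lam * ∫ s in (0:ℝ)..x, |p s - q s|) with hN
        have hN0 : 0 ≤ N := le_trans (abs_nonneg _) (le_max_left _ _)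
        have hgN : |p x - q x| ≤ N := le_max_left _ _
        have hWN : lam * ∫ s in (0:ℝ)..x, |p s - q s| ≤ N := le_max_right _ _
        apply max_le
        · -- first component
          have hkd := hkeyder x hx0 hxr
          have hb1 : 1000000 * (A * (M * x + M ^ 2 * x ^ 3)) ≤ eps := by
            rw [heps]
            have hx3 : x ^ 3 ≤ r ^ 3 := pow_le_pow_left₀ hx0.le hxr 3
            have h1 : M * x ≤ M * r := mul_le_mul_of_nonneg_left hxr hM0.le
            have h2 : M ^ 2 * x ^ 3 ≤ M ^ 2 * r ^ 3 :=
              mul_le_mul_of_nonneg_left hx3 (sq_nonneg M)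
            have h3 : A * (M * x + M ^ 2 * x ^ 3) ≤ A * (M * r + M ^ 2 * r ^ 3) :=
              mul_le_mul_of_nonneg_left (by linarith only [h1, h2]) hA0
            linarith only [h3]
          have hMrlam : M * r ≤ lam := by
            rw [hM, hlam]
            have h0 : 0 ≤ (C₀ + 1) * E2 := mul_nonneg (by linarith) hE2pos.le
            linarith only [h0]
          have hb2 : 1000000 * (M * x) * |p x - q x| ≤ 1000000 * lam * N := by
            have h1 : M * x ≤ lam := le_trans (mul_le_mul_of_nonneg_left hxr hM0.le) hMrlam
            have h2 : 1000000 * (M * x) ≤ 1000000 * lam := by linarith only [h1]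
            exact mul_le_mul h2 hgN (abs_nonneg _)
              (mul_nonneg (by norm_num) hlampos.le)
          have hb3 : 1000000 * ((M ^ 2 * x ^ 2 + M) * ∫ s in (0:ℝ)..x, |p s - q s|) ≤
              1000000 * lam * N := by
            have hMlam2 : M ^ 2 * x ^ 2 + M ≤ lam ^ 2 := by
              have hx2 : x ^ 2 ≤ r ^ 2 := pow_le_pow_left₀ hx0.le hxr 2
              have e1 : M ^ 2 * x ^ 2 ≤ M ^ 2 * r ^ 2 :=
                mul_le_mul_of_nonneg_left hx2 (sq_nonneg M)
              have e2 : lam ^ 2 = M ^ 2 * r ^ 2 + ((C₀ + 1) ^ 2 * (2 * (E4 * r) * E2 + E2 ^ 2)) := by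
                rw [hlam, hM]; ring
              have e3 : M ≤ (C₀ + 1) ^ 2 * E2 ^ 2 := by
                rw [hM, hE4sq]
                have h4 : C₀ + 1 ≤ (C₀ + 1) ^ 2 := by
                  have := le_mul_of_one_le_left
                    (show (0:ℝ) ≤ C₀ + 1 by linarith) (show (1:ℝ) ≤ C₀ + 1 by linarith)
                  calc C₀ + 1 ≤ (C₀ + 1) * (C₀ + 1) := this
                    _ = (C₀ + 1) ^ 2 := by ring
                exact mul_le_mul_of_nonneg_right h4 (sq_nonneg E2)
              have e4 : 0 ≤ (C₀ + 1) ^ 2 * (2 * (E4 * r) * E2) := by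
                have : 0 ≤ E4 * r := mul_nonneg hE4pos.le hr
                positivity
              linarith only [e1, e2, e3, e4]
            have h5 : (M ^ 2 * x ^ 2 + M) * (∫ s in (0:ℝ)..x, |p s - q s|) ≤
                lam ^ 2 * ∫ s in (0:ℝ)..x, |p s - q s| :=
              mul_le_mul_of_nonneg_right hMlam2 hW0x
            have h6 : lam ^ 2 * (∫ s in (0:ℝ)..x, |p s - q s|)
                = lam * (lam * ∫ s in (0:ℝ)..x, |p s - q s|) := by ring
            have h7 : lam * (lam * ∫ s in (0:ℝ)..x, |p s - q s|) ≤ lam * N :=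
              mul_le_mul_of_nonneg_left hWN hlampos.le
            have h8 : (M ^ 2 * x ^ 2 + M) * (∫ s in (0:ℝ)..x, |p s - q s|) ≤ lam * N := by
              rw [h6] at h5; linarith only [h5, h7]
            calc 1000000 * ((M ^ 2 * x ^ 2 + M) * ∫ s in (0:ℝ)..x, |p s - q s|)
                ≤ 1000000 * (lam * N) := by linarith only [h8]
              _ = 1000000 * lam * N := by ring
          have hKN : 1000000 * lam * N + 1000000 * lam * N ≤ K * N := by
            rw [hK]
            have h0 : 0 ≤ lam * N := mul_nonneg hlampos.le hN0
            linarith only [h0]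
          calc |deriv p x - deriv q x| ≤
              1000000 * (A * (M * x + M ^ 2 * x ^ 3)) + 1000000 * (M * x) * |p x - q x| +
                1000000 * ((M ^ 2 * x ^ 2 + M) * ∫ s in (0:ℝ)..x, |p s - q s|) := hkd
            _ ≤ eps + 1000000 * lam * N + 1000000 * lam * N := by
                linarith only [hb1, hb2, hb3]
            _ ≤ K * N + eps := by linarith only [hKN]
        · -- second component
          have h1 : abs (lam * |p x - q x|) = lam * |p x - q x| :=
            abs_of_nonneg (mul_nonneg hlampos.le (abs_nonneg _))
          rw [h1]
          have h2 : lam * |p x - q x| ≤ lam * N := mul_le_mul_of_nonneg_left hgN hlampos.le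
          have h3 : lam * N ≤ K * N := by
            apply mul_le_mul_of_nonneg_right _ hN0
            rw [hK]; linarith only [hlampos.le]
          linarith only [h2, h3, heps0])
      r (Set.right_mem_Icc.2 har.le)
    -- now massage the conclusion
    have hnormr : |p r - q r| ≤
        ‖(p r - q r, lam * ∫ s in (0:ℝ)..r, |p s - q s|)‖ := by
      rw [Prod.norm_def, Real.norm_eq_abs]
      exact le_max_left _ _
    have hnorma : ‖(p a - q a, lam * ∫ s in (0:ℝ)..a, |p s - q s|)‖ ≤
        |p a - q a| + lam * (E4 * a) := by
      rw [Prod.norm_def, Real.norm_eq_abs, Real.norm_eq_abs,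
        abs_of_nonneg (mul_nonneg hlampos.le (hw0 a ha.le))]
      apply max_le
      · have h0 : 0 ≤ lam * (E4 * a) :=
          mul_nonneg hlampos.le (mul_nonneg hE4pos.le ha.le)
        linarith only [h0]
      · have h1 : (∫ s in (0:ℝ)..a, |p s - q s|) ≤ E4 * a := hwle a ha.le
        have h2 : lam * (∫ s in (0:ℝ)..a, |p s - q s|) ≤ lam * (E4 * a) :=
          mul_le_mul_of_nonneg_left h1 hlampos.le
        linarith only [h2, abs_nonneg (p a - q a)]
    have hgbmono : gronwallBound ‖(p a - q a, lam * ∫ s in (0:ℝ)..a, |p s - q s|)‖ K eps (r - a)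
        ≤ (|p a - q a| + lam * (E4 * a)) * Real.exp (K * r) + eps / K * (Real.exp (K * r) - 1) := by
      rw [gronwallBound_of_K_ne_0 hKpos.ne']
      have he1 : Real.exp (K * (r - a)) ≤ Real.exp (K * r) := by
        apply Real.exp_le_exp.2
        have h0 : 0 ≤ K * a := mul_nonneg hKpos.le ha.le
        linarith only [h0]
      have hd0 : 0 ≤ ‖(p a - q a, lam * ∫ s in (0:ℝ)..a, |p s - q s|)‖ := norm_nonneg _
      have hek : 0 ≤ eps / K := div_nonneg heps0 hKpos.le
      have h3 : ‖(p a - q a, lam * ∫ s in (0:ℝ)..a, |p s - q s|)‖ * Real.exp (K * (r - a))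
          ≤ (|p a - q a| + lam * (E4 * a)) * Real.exp (K * r) :=
        mul_le_mul hnorma he1 (Real.exp_pos _).le (le_trans hd0 hnorma)
      have h4 : eps / K * (Real.exp (K * (r - a)) - 1) ≤ eps / K * (Real.exp (K * r) - 1) :=
        mul_le_mul_of_nonneg_left (by linarith only [he1]) hek
      linarith only [h3, h4]
    calc |p r - q r| ≤ ‖(p r - q r, lam * ∫ s in (0:ℝ)..r, |p s - q s|)‖ := hnormr
      _ ≤ gronwallBound ‖(p a - q a, lam * ∫ s in (0:ℝ)..a, |p s - q s|)‖ K eps (r - a) := key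
      _ ≤ _ := hgbmono

  -- pass to the limit a → 0⁺
  have hfinal : |p r - q r| ≤ eps / K * (Real.exp (K * r) - 1) := by
    have hpq0 : p 0 - q 0 = 0 := by rw [hp0, hq0]; ring
    have htend0 : Filter.Tendsto (fun a => |p a - q a|)
        (nhdsWithin 0 (Set.Ioi 0)) (nhds 0) := by
      have h1 : Filter.Tendsto (fun a => p a - q a)
          (nhdsWithin 0 (Set.Ici 0)) (nhds 0) := by
        have h2 := (hgcont 0 Set.self_mem_Ici).tendsto
        rwa [hpq0] at h2
      have h2 := h1.mono_left (nhdsWithin_mono 0 Set.Ioi_subset_Ici_self)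
      have h3 := h2.abs
      simpa using h3
    have htendlin : Filter.Tendsto (fun a : ℝ => lam * (E4 * a))
        (nhdsWithin 0 (Set.Ioi 0)) (nhds 0) := by
      have h1 : Filter.Tendsto (fun a : ℝ => lam * (E4 * a)) (nhds 0)
          (nhds (lam * (E4 * 0))) :=
        (continuous_const.mul (continuous_const.mul continuous_id)).tendsto 0
      have h2 : lam * (E4 * 0) = 0 := by ring
      rw [h2] at h1
      exact h1.mono_left nhdsWithin_le_nhds
    have htend : Filter.Tendsto
        (fun a => (|p a - q a| + lam * (E4 * a)) * Real.exp (K * r) +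
          eps / K * (Real.exp (K * r) - 1))
        (nhdsWithin 0 (Set.Ioi 0))
        (nhds (eps / K * (Real.exp (K * r) - 1))) := by
      have h3 := ((htend0.add htendlin).mul_const (Real.exp (K * r))).add_const
        (eps / K * (Real.exp (K * r) - 1))
      simpa using h3
    apply ge_of_tendsto htend
    filter_upwards [Ioo_mem_nhdsGT_of_mem (Set.mem_Ico.2 ⟨le_rfl, hR⟩)] with a ha
    exact hgron a ha.1 ha.2
  -- final numeric assembly
  have hexp1 : Real.exp (K * r) - 1 ≤ K * r * Real.exp (K * r) := by
    have h7 := Real.add_one_le_exp (-(K * r))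
    have h8 : Real.exp (-(K * r)) * Real.exp (K * r) = 1 := by
      rw [← Real.exp_add]; simp
    have h9 := mul_le_mul_of_nonneg_right h7 (Real.exp_pos (K * r)).le
    rw [h8] at h9
    linarith only [h9]
  have h5 : eps / K * (Real.exp (K * r) - 1) ≤ eps * r * Real.exp (K * r) := by
    have h6 : eps / K * (Real.exp (K * r) - 1) ≤ eps / K * (K * r * Real.exp (K * r)) :=
      mul_le_mul_of_nonneg_left hexp1 (div_nonneg heps0 hKpos.le)
    have h7 : eps / K * (K * r * Real.exp (K * r)) = eps * r * Real.exp (K * r) := by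
      field_simp
    linarith only [h6, h7]
  have hcc : (0:ℝ) ≤ C₀ + 1 := by linarith only [hC₀.le]
  have hc3nn : (0:ℝ) ≤ (C₀ + 1) ^ 3 := pow_nonneg hcc 3
  have hc13 : C₀ + 1 ≤ (C₀ + 1) ^ 3 := by
    have h1 : C₀ + 1 ≤ (C₀ + 1) * (C₀ + 1) :=
      le_mul_of_one_le_left hcc (by linarith only [hC₀.le])
    have h2 : (C₀ + 1) * (C₀ + 1) ≤ ((C₀ + 1) * (C₀ + 1)) * (C₀ + 1) :=
      le_mul_of_one_le_right (mul_nonneg hcc hcc) (by linarith only [hC₀.le])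
    linarith only [h1, h2]
  have hepsr : eps * r ≤ 1000000 * (C₀ + 1) ^ 3 * (Real.exp (6 * κ) * (r ^ 2 + E4 * r ^ 4)) := by
    have hid2 : eps * r = 1000000 * (C₀ * (C₀ + 1)) * (E2 * E4 * r ^ 2)
        + 1000000 * (C₀ * (C₀ + 1) ^ 2) * (E2 * E4 * E4 * r ^ 4) := by
      rw [heps, hA, hM]; ring
    have he6' : Real.exp (6 * κ) * (r ^ 2 + E4 * r ^ 4)
        = E2 * E4 * r ^ 2 + E2 * E4 * E4 * r ^ 4 := by
      rw [he6]; ring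
    have m1 : (0:ℝ) ≤ E2 * E4 * r ^ 2 := by
      have := mul_nonneg hE2pos.le hE4pos.le; positivity
    have m2 : (0:ℝ) ≤ E2 * E4 * E4 * r ^ 4 := by positivity
    have c1 : C₀ * (C₀ + 1) ≤ (C₀ + 1) ^ 3 := by
      have h1 : C₀ * (C₀ + 1) ≤ (C₀ + 1) * (C₀ + 1) :=
        mul_le_mul_of_nonneg_right (by linarith only [hC₀.le]) hcc
      have h2 : (C₀ + 1) * (C₀ + 1) ≤ ((C₀ + 1) * (C₀ + 1)) * (C₀ + 1) :=
        le_mul_of_one_le_right (mul_nonneg hcc hcc) (by linarith only [hC₀.le])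
      linarith only [h1, h2]
    have c2 : C₀ * (C₀ + 1) ^ 2 ≤ (C₀ + 1) ^ 3 := by
      have h1 : C₀ * ((C₀ + 1) * (C₀ + 1)) ≤ (C₀ + 1) * ((C₀ + 1) * (C₀ + 1)) :=
        mul_le_mul_of_nonneg_right (by linarith only [hC₀.le]) (mul_nonneg hcc hcc)
      linarith only [h1]
    have t1 := mul_le_mul_of_nonneg_right c1 m1
    have t2 := mul_le_mul_of_nonneg_right c2 m2
    rw [hid2, he6']
    linarith only [t1, t2]
  have hE4r2 : (0:ℝ) ≤ E4 * r ^ 2 := mul_nonneg hE4pos.le (sq_nonneg r)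
  have hE8r4 : (0:ℝ) ≤ E8 * r ^ 4 := mul_nonneg hE8pos.le (by positivity)
  have hKr : K * r ≤ 4000000 * (C₀ + 1) + 8000000 * (C₀ + 1) * (E4 * r ^ 2 + E8 * r ^ 4) := by
    have hE2r : E2 * r ≤ 1 + E4 * r ^ 2 := by
      have h1 := sq_nonneg (E2 * r - 1)
      have h2 : 0 ≤ E2 * r := mul_nonneg hE2pos.le hr
      have h3 : E4 * r ^ 2 = (E2 * r) ^ 2 := by rw [hE4sq]; ring
      rw [h3]
      linarith only [h1, h2]
    rw [hK, hlam]
    have h5 := mul_le_mul_of_nonneg_left hE2r hcc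
    have h6 := mul_nonneg hcc hE8r4
    have h7 := mul_nonneg hcc hE4r2
    linarith only [h5, h6, h7]
  have hCge : 8000000 * (C₀ + 1) ≤ C := by
    rw [hCdef]
    have h1 : (1:ℝ) ≤ Real.exp (10 ^ 7 * (C₀ + 1)) :=
      Real.one_le_exp (by linarith only [hcc])
    have h2 : (10:ℝ) ^ 7 * (C₀ + 1) ^ 3 * 1 ≤
        10 ^ 7 * (C₀ + 1) ^ 3 * Real.exp (10 ^ 7 * (C₀ + 1)) :=
      mul_le_mul_of_nonneg_left h1 (by linarith only [hc3nn])
    linarith only [h2, hc13, hc3nn]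
  have hexpKr : Real.exp (K * r) ≤
      Real.exp (4000000 * (C₀ + 1)) * Real.exp (C * (E4 * r ^ 2 + E8 * r ^ 4)) := by
    rw [← Real.exp_add]
    apply Real.exp_le_exp.2
    have h1 : 8000000 * (C₀ + 1) * (E4 * r ^ 2 + E8 * r ^ 4) ≤ C * (E4 * r ^ 2 + E8 * r ^ 4) :=
      mul_le_mul_of_nonneg_right hCge (by linarith only [hE4r2, hE8r4])
    linarith only [hKr, h1]
  have hXnn : 0 ≤ Real.exp (6 * κ) * (r ^ 2 + E4 * r ^ 4) :=
    mul_nonneg (Real.exp_nonneg _)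
      (add_nonneg (sq_nonneg r) (mul_nonneg hE4pos.le (by positivity)))
  have hCbig : 1000000 * (C₀ + 1) ^ 3 * Real.exp (4000000 * (C₀ + 1)) ≤ C := by
    rw [hCdef]
    have h1 : Real.exp (4000000 * (C₀ + 1)) ≤ Real.exp (10 ^ 7 * (C₀ + 1)) :=
      Real.exp_le_exp.2 (by linarith only [hcc])
    have h2 : 1000000 * (C₀ + 1) ^ 3 * Real.exp (4000000 * (C₀ + 1)) ≤
        1000000 * (C₀ + 1) ^ 3 * Real.exp (10 ^ 7 * (C₀ + 1)) :=
      mul_le_mul_of_nonneg_left h1 (by linarith only [hc3nn])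
    have h3 : 1000000 * (C₀ + 1) ^ 3 * Real.exp (10 ^ 7 * (C₀ + 1)) ≤
        10 ^ 7 * (C₀ + 1) ^ 3 * Real.exp (10 ^ 7 * (C₀ + 1)) := by
      apply mul_le_mul_of_nonneg_right _ (Real.exp_pos _).le
      linarith only [hc3nn]
    linarith only [h2, h3]
  calc |p r - q r| ≤ eps / K * (Real.exp (K * r) - 1) := hfinal
    _ ≤ eps * r * Real.exp (K * r) := h5
    _ ≤ 1000000 * (C₀ + 1) ^ 3 * (Real.exp (6 * κ) * (r ^ 2 + E4 * r ^ 4)) *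
          Real.exp (K * r) :=
        mul_le_mul_of_nonneg_right hepsr (Real.exp_nonneg _)
    _ ≤ 1000000 * (C₀ + 1) ^ 3 * (Real.exp (6 * κ) * (r ^ 2 + E4 * r ^ 4)) *
          (Real.exp (4000000 * (C₀ + 1)) * Real.exp (C * (E4 * r ^ 2 + E8 * r ^ 4))) := by
        apply mul_le_mul_of_nonneg_left hexpKr
        exact mul_nonneg (mul_nonneg (by norm_num) hc3nn) hXnn
    _ = 1000000 * (C₀ + 1) ^ 3 * Real.exp (4000000 * (C₀ + 1)) *
          (Real.exp (6 * κ) * (r ^ 2 + E4 * r ^ 4)) *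
          Real.exp (C * (E4 * r ^ 2 + E8 * r ^ 4)) := by ring
    _ ≤ C * (Real.exp (6 * κ) * (r ^ 2 + E4 * r ^ 4)) *
          Real.exp (C * (E4 * r ^ 2 + E8 * r ^ 4)) := by
        apply mul_le_mul_of_nonneg_right
          (mul_le_mul_of_nonneg_right hCbig hXnn) (Real.exp_nonneg _)
    _ = C * Real.exp (6 * κ) * (r ^ 2 + E4 * r ^ 4) *
          Real.exp (C * (E4 * r ^ 2 + E8 * r ^ 4)) := by ring

end
end

section
/- Assume P satisfies (P1). Define N(ρ) := exp( ∫₁^ρ ds / (s + P(s)) ) for ρ > 0. Then: (i) lim_{ρ→0+} N(ρ) = 0, so that setting N(0) := 0 makes N continuous on [0,∞); (ii) N is C² on (0,∞) with N′(ρ) = N(ρ)/(ρ + P(ρ)) > 0 and N″(ρ) = − P′(ρ) N(ρ)/(ρ + P(ρ))² < 0 for ρ > 0, so N′ is positive and strictly decreasing on (0,∞); (iii) lim_{ρ→0+} N′(ρ) exists and lies in (0,∞), so N ∈ C¹([0,∞)); (iv) lim_{ρ→∞} N(ρ) = ∞, so N : [0,∞) → [0,∞) is a strictly increasing bijection. 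-/
open MeasureTheory Filter

noncomputable section

/-- The number density `N(ρ) = exp(∫₁^ρ ds/(s + P(s)))` associated with the equation of
state `P` (meaningful for `ρ > 0`). -/
def Nfun (P : ℝ → ℝ) (ρ : ℝ) : ℝ := Real.exp (∫ s in (1:ℝ)..ρ, (s + P s)⁻¹)

/-- The extension of `Nfun` by the value `0` for `ρ ≤ 0`. -/
def Nfun₀ (P : ℝ → ℝ) (ρ : ℝ) : ℝ := if ρ ≤ 0 then 0 else Nfun P ρ

/-- Under assumption (P1) on the equation of state `P`, the number density
`N(ρ) = exp(∫₁^ρ ds/(s+P(s)))` satisfies: (i) `N(ρ) → 0` as `ρ → 0⁺`, so setting `N(0) = 0`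
gives a continuous function on `[0,∞)`; (ii) `N` is `C²` on `(0,∞)` with
`N′ = N/(ρ+P) > 0` and `N″ = −P′N/(ρ+P)² < 0`, so `N′` is strictly decreasing on `(0,∞)`;
(iii) `N′(ρ)` has a finite positive limit as `ρ → 0⁺`, so `N ∈ C¹([0,∞))`; (iv) `N(ρ) → ∞`
as `ρ → ∞`, so the extended `N` is a strictly increasing bijection of `[0,∞)` onto itself. -/
theorem stmt17 (P : ℝ → ℝ) (c₁ c₂ n ρs : ℝ)
    (hPC1 : ContDiffOn ℝ 1 P (Set.Ici 0)) (hP0 : P 0 = 0)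
    (hP' : ∀ ρ : ℝ, 0 < ρ → 0 < deriv P ρ)
    (hc₁ : 0 < c₁) (hn : n ∈ Set.Ioo (0:ℝ) 3) (hρs : 0 < ρs)
    (hPsmall : ∀ ρ ∈ Set.Ioo (0:ℝ) ρs, deriv P ρ ≤ c₁ * ρ ^ (1 / n))
    (hPbij : Set.BijOn P (Set.Ici 0) (Set.Ici 0))
    (hc₂ : 0 < c₂)
    (hPinv : ∀ q : ℝ, 0 < q → ∀ ρ : ℝ, 0 ≤ ρ → P ρ = q →
      |ρ - 3 * q| ≤ c₂ * Real.sqrt q) :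
    Tendsto (Nfun P) (nhdsWithin 0 (Set.Ioi 0)) (nhds 0) ∧
    ContinuousOn (Nfun₀ P) (Set.Ici 0) ∧
    ContDiffOn ℝ 2 (Nfun P) (Set.Ioi 0) ∧
    (∀ ρ : ℝ, 0 < ρ →
      deriv (Nfun P) ρ = Nfun P ρ / (ρ + P ρ) ∧
      0 < deriv (Nfun P) ρ ∧
      deriv (deriv (Nfun P)) ρ = -(deriv P ρ) * Nfun P ρ / (ρ + P ρ) ^ 2 ∧
      deriv (deriv (Nfun P)) ρ < 0) ∧
    StrictAntiOn (deriv (Nfun P)) (Set.Ioi 0) ∧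
    (∃ L : ℝ, 0 < L ∧ Tendsto (deriv (Nfun P)) (nhdsWithin 0 (Set.Ioi 0)) (nhds L)) ∧
    ContDiffOn ℝ 1 (Nfun₀ P) (Set.Ici 0) ∧
    Tendsto (Nfun P) atTop atTop ∧
    StrictMonoOn (Nfun₀ P) (Set.Ici 0) ∧
    Set.BijOn (Nfun₀ P) (Set.Ici 0) (Set.Ici 0) := by
  obtain ⟨hn0, hn3⟩ := hn
  have h1n : (0:ℝ) < 1/n := one_div_pos.mpr hn0
  set f : ℝ → ℝ := fun s => (s + P s)⁻¹ with hfdef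
  set F : ℝ → ℝ := fun ρ => ∫ s in (1:ℝ)..ρ, f s with hFdef
  have hNF : Nfun P = fun ρ => Real.exp (F ρ) := rfl
  have hPmono : StrictMonoOn P (Set.Ici 0) := by
    apply strictMonoOn_of_deriv_pos (convex_Ici 0) hPC1.continuousOn
    intro x hx; rw [interior_Ici] at hx; exact hP' x hx
  have hPpos : ∀ s : ℝ, 0 < s → 0 < P s := by
    intro s hs
    have := hPmono Set.self_mem_Ici (le_of_lt hs) hs
    rwa [hP0] at this
  have hgpos : ∀ s : ℝ, 0 < s → 0 < s + P s := fun s hs => add_pos hs (hPpos s hs)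
  have hgne : ∀ s : ℝ, 0 < s → s + P s ≠ 0 := fun s hs => (hgpos s hs).ne'
  have hfpos : ∀ s : ℝ, 0 < s → 0 < f s := fun s hs => inv_pos.2 (hgpos s hs)
  have hPcontAt : ∀ s : ℝ, 0 < s → ContinuousAt P s := fun s hs =>
    hPC1.continuousOn.continuousAt (Ici_mem_nhds hs)
  have hfcontAt : ∀ s : ℝ, 0 < s → ContinuousAt f s := fun s hs =>
    ((continuousAt_id.add (hPcontAt s hs)).inv₀ (hgne s hs))
  have hfcontOn : ContinuousOn f (Set.Ioi 0) := fun s hs =>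
    (hfcontAt s hs).continuousWithinAt
  have hfint : ∀ a b : ℝ, 0 < a → 0 < b → IntervalIntegrable f volume a b := by
    intro a b ha hb
    exact (hfcontOn.mono (Set.ordConnected_Ioi.uIcc_subset ha hb)).intervalIntegrable
  have hFderiv : ∀ ρ : ℝ, 0 < ρ → HasDerivAt F (f ρ) ρ := by
    intro ρ hρ
    exact intervalIntegral.integral_hasDerivAt_right (hfint 1 ρ one_pos hρ)
      (hfcontOn.stronglyMeasurableAtFilter isOpen_Ioi ρ hρ) (hfcontAt ρ hρ)
  have hNderiv : ∀ ρ : ℝ, 0 < ρ → HasDerivAt (Nfun P) (Nfun P ρ * f ρ) ρ := by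
    intro ρ hρ
    have := (hFderiv ρ hρ).exp
    rw [hNF]; exact this
  have hN'eq : ∀ ρ : ℝ, 0 < ρ → deriv (Nfun P) ρ = Nfun P ρ / (ρ + P ρ) := by
    intro ρ hρ
    rw [(hNderiv ρ hρ).deriv, div_eq_mul_inv]
  have hNpos : ∀ ρ : ℝ, 0 < Nfun P ρ := fun ρ => Real.exp_pos _
  have hN'pos : ∀ ρ : ℝ, 0 < ρ → 0 < deriv (Nfun P) ρ := by
    intro ρ hρ
    rw [hN'eq ρ hρ]; exact div_pos (hNpos ρ) (hgpos ρ hρ)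
  have hPderivAt : ∀ ρ : ℝ, 0 < ρ → HasDerivAt P (deriv P ρ) ρ := fun ρ hρ =>
    ((hPC1.contDiffAt (Ici_mem_nhds hρ)).differentiableAt one_ne_zero).hasDerivAt
  have hderivN_ev : ∀ ρ : ℝ, 0 < ρ →
      deriv (Nfun P) =ᶠ[nhds ρ] fun x => Nfun P x * f x := by
    intro ρ hρ
    exact eventually_of_mem (Ioi_mem_nhds hρ) (fun x hx => (hNderiv x hx).deriv)
  have hN2At : ∀ ρ : ℝ, 0 < ρ → HasDerivAt (deriv (Nfun P))
      (-(deriv P ρ) * Nfun P ρ / (ρ + P ρ) ^ 2) ρ := by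
    intro ρ hρ
    have hg : HasDerivAt (fun s => s + P s) (1 + deriv P ρ) ρ :=
      (hasDerivAt_id ρ).add (hPderivAt ρ hρ)
    have hfd : HasDerivAt f (-(1 + deriv P ρ) / (ρ + P ρ) ^ 2) ρ := hg.inv (hgne ρ hρ)
    have hprod := (hNderiv ρ hρ).mul hfd
    have h2 : HasDerivAt (fun x => Nfun P x * f x)
        (-(deriv P ρ) * Nfun P ρ / (ρ + P ρ) ^ 2) ρ := by
      refine hprod.congr_deriv ?_
      have hne := hgne ρ hρ
      simp only [hfdef]
      field_simp
      ring
    exact h2.congr_of_eventuallyEq (hderivN_ev ρ hρ)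
  have hC2 : ContDiffOn ℝ 2 (Nfun P) (Set.Ioi 0) := by
    have hC1f : ContDiffOn ℝ 1 f (Set.Ioi 0) := by
      apply ContDiffOn.inv
      · exact contDiffOn_id.add (hPC1.mono Set.Ioi_subset_Ici_self)
      · exact fun x hx => hgne x hx
    have hC2F : ContDiffOn ℝ 2 F (Set.Ioi 0) := by
      rw [← one_add_one_eq_two, contDiffOn_succ_iff_deriv_of_isOpen isOpen_Ioi]
      refine ⟨fun x hx => ((hFderiv x hx).differentiableAt).differentiableWithinAt,
        by simp, ?_⟩
      exact hC1f.congr (fun x hx => (hFderiv x hx).deriv)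
    rw [hNF]
    exact Real.contDiff_exp.comp_contDiffOn hC2F

  -- small-rho bounds
  set δ : ℝ := min (ρs/2) 1 with hδdef
  have hδpos : 0 < δ := lt_min (by linarith) one_pos
  have hδ1 : δ ≤ 1 := min_le_right _ _
  have hδρs : δ < ρs := lt_of_le_of_lt (min_le_left _ _) (by linarith)
  have hPbound : ∀ s ∈ Set.Ioc (0:ℝ) δ, P s ≤ c₁ * s ^ (1 + 1/n) := by
    intro s hs
    have hs0 : 0 < s := hs.1
    have hint : IntervalIntegrable (deriv P) volume 0 s := by
      rw [intervalIntegrable_iff_integrableOn_Icc_of_le hs0.le]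
      apply Measure.integrableOn_of_bounded (M := c₁) (by simp)
        (measurable_deriv P).aestronglyMeasurable
      have h0 : (volume.restrict (Set.Icc (0:ℝ) s)) {0} = 0 := by
        refine le_antisymm (le_trans (Measure.restrict_apply_le _ _) (by simp)) zero_le
      have h0' : ∀ᵐ t ∂(volume.restrict (Set.Icc (0:ℝ) s)), t ≠ 0 := by
        rw [ae_iff]; convert h0 using 2; ext t; simp
      filter_upwards [h0', ae_restrict_mem measurableSet_Icc] with t ht0 htm
      have ht : 0 < t := lt_of_le_of_ne htm.1 (Ne.symm ht0)
      have h1 := hP' t ht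
      have h2 := hPsmall t ⟨ht, lt_of_le_of_lt (htm.2.trans hs.2) hδρs⟩
      rw [Real.norm_eq_abs, abs_of_pos h1]
      calc deriv P t ≤ c₁ * t ^ (1/n) := h2
        _ ≤ c₁ * 1 := by
            apply mul_le_mul_of_nonneg_left _ hc₁.le
            apply Real.rpow_le_one ht.le _ h1n.le
            exact (htm.2.trans hs.2).trans hδ1
        _ = c₁ := mul_one _
    have hFTC : ∫ t in (0:ℝ)..s, deriv P t = P s - P 0 := by
      apply intervalIntegral.integral_eq_sub_of_hasDeriv_right_of_le hs0.le
        (hPC1.continuousOn.mono (Set.Icc_subset_Ici_self))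
        (fun x hx => (hPderivAt x hx.1).hasDerivWithinAt) hint
    have hint2 : IntervalIntegrable (fun t : ℝ => c₁ * t ^ (1/n)) volume 0 s :=
      (intervalIntegral.intervalIntegrable_rpow' (by linarith : (-1:ℝ) < 1/n)).const_mul c₁
    have hmono : ∫ t in (0:ℝ)..s, deriv P t ≤ ∫ t in (0:ℝ)..s, c₁ * t ^ (1/n) := by
      apply intervalIntegral.integral_mono_ae_restrict hs0.le hint hint2
      have h0 : (volume.restrict (Set.Icc (0:ℝ) s)) {0} = 0 := by
        refine le_antisymm (le_trans (Measure.restrict_apply_le _ _) (by simp)) zero_le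
      have h0' : ∀ᵐ t ∂(volume.restrict (Set.Icc (0:ℝ) s)), t ≠ 0 := by
        rw [ae_iff]; convert h0 using 2; ext t; simp
      filter_upwards [h0', ae_restrict_mem measurableSet_Icc] with t ht0 htm
      exact hPsmall t ⟨lt_of_le_of_ne htm.1 (Ne.symm ht0),
        lt_of_le_of_lt (htm.2.trans hs.2) hδρs⟩
    have hval : ∫ t in (0:ℝ)..s, c₁ * t ^ (1/n) = c₁ * (s ^ (1/n + 1) / (1/n + 1)) := by
      rw [intervalIntegral.integral_const_mul, integral_rpow (Or.inl (by linarith : (-1:ℝ) < 1/n))]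
      rw [Real.zero_rpow (by linarith : (0:ℝ) < 1/n+1).ne']
      ring
    have hle : c₁ * (s ^ (1/n + 1) / (1/n + 1)) ≤ c₁ * s ^ (1 + 1/n) := by
      rw [add_comm (1/n) 1]
      apply mul_le_mul_of_nonneg_left _ hc₁.le
      apply div_le_self (Real.rpow_nonneg hs0.le _)
      linarith
    have := hFTC ▸ hmono
    rw [hP0, sub_zero] at this
    linarith [hval ▸ this]
  have hfge : ∀ s ∈ Set.Ioc (0:ℝ) δ, s⁻¹ - c₁ * s ^ (1/n - 1) ≤ f s := by
    intro s hs
    have hs0 : 0 < s := hs.1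
    have hrw : s⁻¹ - c₁ * s ^ (1/n - 1) = (1 - c₁ * s ^ (1/n)) * s⁻¹ := by
      rw [Real.rpow_sub hs0, Real.rpow_one]
      field_simp
    rw [hrw]
    rcases le_or_gt 1 (c₁ * s ^ (1/n)) with h | h
    · exact le_trans (mul_nonpos_of_nonpos_of_nonneg (by linarith) (inv_nonneg.2 hs0.le))
        (hfpos s hs0).le
    · have hkey : (1 - c₁ * s ^ (1/n)) * (s + P s) ≤ s := by
        have h1 : P s ≤ c₁ * s ^ (1/n) * s := by
          have := hPbound s hs
          rwa [Real.rpow_add hs0, Real.rpow_one, mul_comm s (s ^ (1/n)), ← mul_assoc] at this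
        have h2 : c₁ * s ^ (1/n) * s ≤ c₁ * s ^ (1/n) * (s + P s) := by
          apply mul_le_mul_of_nonneg_left _ (mul_nonneg hc₁.le (Real.rpow_nonneg hs0.le _))
          linarith [(hPpos s hs0).le]
        nlinarith [hPpos s hs0]
      calc (1 - c₁ * s ^ (1/n)) * s⁻¹ = ((1 - c₁ * s ^ (1/n)) * (s + P s)) / (s * (s + P s)) := by
            field_simp [hgne s hs0]
        _ ≤ s / (s * (s + P s)) := by
            have hden : 0 < s * (s + P s) := mul_pos hs0 (hgpos s hs0)
            exact (div_le_div_iff_of_pos_right hden).mpr hkey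
        _ = f s := by
            simp only [hfdef]
            rw [← div_div, div_self hs0.ne', one_div]

  set G : ℝ → ℝ := fun s => Real.log s - c₁ * n * s ^ (1/n) with hGdef
  have hGderiv : ∀ x : ℝ, 0 < x → HasDerivAt G (x⁻¹ - c₁ * x ^ (1/n - 1)) x := by
    intro x hx
    have h1 : HasDerivAt Real.log x⁻¹ x := Real.hasDerivAt_log hx.ne'
    have h2 : HasDerivAt (fun s : ℝ => s ^ (1/n)) (1/n * x ^ (1/n - 1)) x :=
      Real.hasDerivAt_rpow_const (Or.inl hx.ne')
    have h3 := h1.sub (h2.const_mul (c₁ * n))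
    refine h3.congr_deriv ?_
    field_simp
  have hGint : ∀ a b : ℝ, 0 < a → 0 < b →
      IntervalIntegrable (fun x : ℝ => x⁻¹ - c₁ * x ^ (1/n - 1)) volume a b := by
    intro a b ha hb
    apply ContinuousOn.intervalIntegrable
    apply ContinuousOn.mono _ (Set.ordConnected_Ioi.uIcc_subset ha hb)
    intro x hx
    have hx0 : (0:ℝ) < x := hx
    exact ((continuousAt_inv₀ hx0.ne').sub
      (((Real.continuousAt_rpow_const x _ (Or.inl hx0.ne'))).const_smul c₁)).continuousWithinAt
  have hFub : ∀ ρ ∈ Set.Ioc (0:ℝ) δ, F ρ ≤ (F δ - G δ) + Real.log ρ := by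
    intro ρ hρ
    have hρ0 : 0 < ρ := hρ.1
    have h1 : ∫ s in ρ..δ, (s⁻¹ - c₁ * s ^ (1/n - 1)) = G δ - G ρ := by
      apply intervalIntegral.integral_eq_sub_of_hasDerivAt
      · intro x hx
        rw [Set.uIcc_of_le hρ.2] at hx
        exact hGderiv x (lt_of_lt_of_le hρ0 hx.1)
      · exact hGint ρ δ hρ0 hδpos
    have h2 : ∫ s in ρ..δ, (s⁻¹ - c₁ * s ^ (1/n - 1)) ≤ ∫ s in ρ..δ, f s := by
      apply intervalIntegral.integral_mono_on hρ.2 (hGint ρ δ hρ0 hδpos)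
        (hfint ρ δ hρ0 hδpos)
      intro x hx
      exact hfge x ⟨lt_of_lt_of_le hρ0 hx.1, hx.2⟩
    have h3 : ∫ s in ρ..δ, f s = F δ - F ρ :=
      (intervalIntegral.integral_interval_sub_left (hfint 1 δ one_pos hδpos)
        (hfint 1 ρ one_pos hρ0)).symm
    have h4 : G ρ ≤ Real.log ρ := by
      have : 0 ≤ c₁ * n * ρ ^ (1/n) :=
        mul_nonneg (mul_nonneg hc₁.le hn0.le) (Real.rpow_nonneg hρ0.le _)
      simp only [hGdef]; linarith
    rw [h3] at h2
    rw [h1] at h2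
    linarith
  set A : ℝ := Real.exp (F δ - G δ) with hAdef
  have hApos : 0 < A := Real.exp_pos _
  have hNle : ∀ ρ ∈ Set.Ioc (0:ℝ) δ, Nfun P ρ ≤ A * ρ := by
    intro ρ hρ
    have := Real.exp_le_exp.2 (hFub ρ hρ)
    rw [Real.exp_add, Real.exp_log hρ.1] at this
    exact this
  -- (i)
  have hTend0 : Tendsto (Nfun P) (nhdsWithin 0 (Set.Ioi 0)) (nhds 0) := by
    apply squeeze_zero' (eventually_nhdsWithin_of_forall (fun x _ => (hNpos x).le))
    · exact eventually_of_mem (Ioc_mem_nhdsGT hδpos) (fun x hx => hNle x hx)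
    · have h0 : Continuous (fun x : ℝ => A * x) := continuous_const.mul continuous_id
      have h := h0.tendsto 0
      rw [mul_zero] at h
      exact h.mono_left nhdsWithin_le_nhds
  -- N' bounded near 0
  have hN'le : ∀ ρ ∈ Set.Ioc (0:ℝ) δ, deriv (Nfun P) ρ ≤ A := by
    intro ρ hρ
    rw [hN'eq ρ hρ.1]
    have h1 : Nfun P ρ / (ρ + P ρ) ≤ A * ρ / (ρ + P ρ) :=
      (div_le_div_iff_of_pos_right (hgpos ρ hρ.1)).mpr (hNle ρ hρ)
    have h2 : A * ρ / (ρ + P ρ) ≤ A * ρ / ρ := by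
      apply div_le_div_of_nonneg_left (mul_nonneg hApos.le hρ.1.le) hρ.1
      linarith [(hPpos ρ hρ.1).le]
    have h3 : A * ρ / ρ = A := mul_div_cancel_right₀ A hρ.1.ne'
    linarith
  have hN2neg : ∀ ρ : ℝ, 0 < ρ → deriv (deriv (Nfun P)) ρ < 0 := by
    intro ρ hρ
    rw [(hN2At ρ hρ).deriv]
    apply div_neg_of_neg_of_pos
    · have := hP' ρ hρ
      have := hNpos ρ
      nlinarith
    · exact pow_pos (hgpos ρ hρ) 2
  have hN'contOn : ContinuousOn (deriv (Nfun P)) (Set.Ioi 0) := fun x hx =>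
    ((hN2At x hx).differentiableAt.continuousAt).continuousWithinAt
  have hSA : StrictAntiOn (deriv (Nfun P)) (Set.Ioi 0) := by
    apply strictAntiOn_of_deriv_neg (convex_Ioi 0) hN'contOn
    intro x hx; rw [interior_Ioi] at hx; exact hN2neg x hx
  have hbdd : BddAbove (deriv (Nfun P) '' Set.Ioi 0) := by
    refine ⟨max A (deriv (Nfun P) δ), ?_⟩
    rintro y ⟨x, hx, rfl⟩
    rcases le_or_gt x δ with h | h
    · exact le_max_of_le_left (hN'le x ⟨hx, h⟩)
    · exact le_max_of_le_right (hSA.antitoneOn hδpos hx h.le)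
  set L : ℝ := sSup (deriv (Nfun P) '' Set.Ioi 0) with hLdef
  have hLtend : Tendsto (deriv (Nfun P)) (nhdsWithin 0 (Set.Ioi 0)) (nhds L) :=
    AntitoneOn.tendsto_nhdsGT hSA.antitoneOn hbdd
  have hLpos : 0 < L :=
    lt_of_lt_of_le (hN'pos 1 one_pos) (le_csSup hbdd (Set.mem_image_of_mem _ (Set.mem_Ioi.mpr one_pos)))
  have hLub : ∀ x : ℝ, 0 < x → deriv (Nfun P) x ≤ L := fun x hx =>
    le_csSup hbdd (Set.mem_image_of_mem _ hx)

  have hNcontOn : ContinuousOn (Nfun P) (Set.Ioi 0) := fun x hx =>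
    (hNderiv x hx).differentiableAt.continuousAt.continuousWithinAt
  have hNleL : ∀ ρ : ℝ, 0 < ρ → Nfun P ρ ≤ L * ρ := by
    intro ρ hρ
    have hmono : MonotoneOn (fun x => L * x - Nfun P x) (Set.Ioi 0) := by
      apply monotoneOn_of_deriv_nonneg (convex_Ioi 0)
      · exact (continuousOn_const.mul continuousOn_id).sub hNcontOn
      · intro x hx
        rw [interior_Ioi] at hx
        have hLd : HasDerivAt (fun y : ℝ => L * y) L x := by
          simpa using (hasDerivAt_id x).const_mul L
        exact (hLd.sub (hNderiv x hx)).differentiableAt.differentiableWithinAt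
      · intro x hx
        rw [interior_Ioi] at hx
        have hLd : HasDerivAt (fun y : ℝ => L * y) L x := by
          simpa using (hasDerivAt_id x).const_mul L
        have hd : HasDerivAt (fun y => L * y - Nfun P y) _ x := hLd.sub (hNderiv x hx)
        rw [hd.deriv]
        have h1 := hLub x hx
        have h2 := (hNderiv x hx).deriv
        rw [h2] at h1
        linarith
    have hev : ∀ᶠ ε in nhdsWithin 0 (Set.Ioi 0),
        L * ε - Nfun P ε ≤ L * ρ - Nfun P ρ := by
      apply eventually_of_mem (Ioc_mem_nhdsGT hρ)
      intro ε hε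
      exact hmono hε.1 hρ hε.2
    have htend : Tendsto (fun ε : ℝ => L * ε - Nfun P ε) (nhdsWithin 0 (Set.Ioi 0)) (nhds 0) := by
      have h0 : Continuous (fun x : ℝ => L * x) := continuous_const.mul continuous_id
      have h := (h0.tendsto 0).mono_left (nhdsWithin_le_nhds (s := Set.Ioi (0:ℝ)))
      rw [mul_zero] at h
      have := h.sub hTend0
      simpa using this
    have := le_of_tendsto htend hev
    linarith
  have hslopele : ∀ ρ : ℝ, 0 < ρ → deriv (Nfun P) ρ * ρ ≤ Nfun P ρ := by
    intro ρ hρ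
    have hmono : MonotoneOn (fun x => Nfun P x - deriv (Nfun P) ρ * x) (Set.Ioc 0 ρ) := by
      apply monotoneOn_of_deriv_nonneg (convex_Ioc 0 ρ)
      · exact (hNcontOn.mono Set.Ioc_subset_Ioi_self).sub
          (continuousOn_const.mul continuousOn_id)
      · intro x hx
        rw [interior_Ioc] at hx
        have hLd : HasDerivAt (fun y : ℝ => deriv (Nfun P) ρ * y) (deriv (Nfun P) ρ) x := by
          simpa using (hasDerivAt_id x).const_mul (deriv (Nfun P) ρ)
        exact ((hNderiv x hx.1).sub hLd).differentiableAt.differentiableWithinAt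
      · intro x hx
        rw [interior_Ioc] at hx
        have hLd : HasDerivAt (fun y : ℝ => deriv (Nfun P) ρ * y) (deriv (Nfun P) ρ) x := by
          simpa using (hasDerivAt_id x).const_mul (deriv (Nfun P) ρ)
        have hd : HasDerivAt (fun y => Nfun P y - deriv (Nfun P) ρ * y) _ x := (hNderiv x hx.1).sub hLd
        rw [hd.deriv]
        have h1 : deriv (Nfun P) ρ ≤ deriv (Nfun P) x := hSA.antitoneOn hx.1 hρ hx.2.le
        have h2 := (hNderiv x hx.1).deriv
        rw [h2] at h1
        linarith
    have hev : ∀ᶠ ε in nhdsWithin 0 (Set.Ioi 0),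
        Nfun P ε - deriv (Nfun P) ρ * ε ≤ Nfun P ρ - deriv (Nfun P) ρ * ρ := by
      apply eventually_of_mem (Ioc_mem_nhdsGT hρ)
      intro ε hε
      exact hmono hε ⟨hρ, le_rfl⟩ hε.2
    have htend : Tendsto (fun ε : ℝ => Nfun P ε - deriv (Nfun P) ρ * ε)
        (nhdsWithin 0 (Set.Ioi 0)) (nhds 0) := by
      have h0 : Continuous (fun x : ℝ => deriv (Nfun P) ρ * x) :=
        continuous_const.mul continuous_id
      have h := (h0.tendsto 0).mono_left (nhdsWithin_le_nhds (s := Set.Ioi (0:ℝ)))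
      rw [mul_zero] at h
      have := hTend0.sub h
      simpa using this
    have := le_of_tendsto htend hev
    linarith
  have hN₀0 : Nfun₀ P 0 = 0 := if_pos le_rfl
  have hN₀pos : ∀ x : ℝ, 0 < x → Nfun₀ P x = Nfun P x := fun x hx => if_neg (not_le.2 hx)
  have hslope0 : HasDerivWithinAt (Nfun₀ P) L (Set.Ici 0) 0 := by
    rw [hasDerivWithinAt_iff_tendsto_slope, Set.Ici_sdiff_left]
    apply tendsto_of_tendsto_of_tendsto_of_le_of_le' hLtend tendsto_const_nhds
    · apply eventually_mem_nhdsWithin.mono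
      intro x hx
      have hx0 : (0:ℝ) < x := hx
      have hsx : slope (Nfun₀ P) 0 x = Nfun P x / x := by
        rw [slope_def_field, hN₀0, hN₀pos x hx0, sub_zero, sub_zero]
      rw [hsx, le_div_iff₀ hx0]
      exact hslopele x hx0
    · apply eventually_mem_nhdsWithin.mono
      intro x hx
      have hx0 : (0:ℝ) < x := hx
      have hsx : slope (Nfun₀ P) 0 x = Nfun P x / x := by
        rw [slope_def_field, hN₀0, hN₀pos x hx0, sub_zero, sub_zero]
      rw [hsx, div_le_iff₀ hx0]
      linarith [hNleL x hx0]
  have hN₀ev : ∀ x : ℝ, 0 < x → Nfun₀ P =ᶠ[nhds x] Nfun P := fun x hx =>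
    eventually_of_mem (Ioi_mem_nhds hx) (fun y hy => hN₀pos y hy)
  have hN₀diff : DifferentiableOn ℝ (Nfun₀ P) (Set.Ici 0) := by
    intro x hx
    rcases eq_or_lt_of_le (Set.mem_Ici.1 hx) with h | h
    · rw [← h]; exact hslope0.differentiableWithinAt
    · exact (((hNderiv x h).differentiableAt.congr_of_eventuallyEq
        (hN₀ev x h))).differentiableWithinAt
  have hdW0 : derivWithin (Nfun₀ P) (Set.Ici 0) 0 = L :=
    hslope0.derivWithin (uniqueDiffOn_Ici 0 0 Set.self_mem_Ici)
  have hdWpos : ∀ x : ℝ, 0 < x →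
      derivWithin (Nfun₀ P) (Set.Ici 0) x = deriv (Nfun P) x := by
    intro x hx
    rw [derivWithin_of_mem_nhds (Ici_mem_nhds hx)]
    exact Filter.EventuallyEq.deriv_eq (hN₀ev x hx)
  have hdWcont : ContinuousOn (derivWithin (Nfun₀ P) (Set.Ici 0)) (Set.Ici 0) := by
    intro x hx
    rcases eq_or_lt_of_le (Set.mem_Ici.1 hx) with h | h
    · subst h
      have hnhds : nhdsWithin (0:ℝ) (Set.Ici 0) = pure 0 ⊔ nhdsWithin 0 (Set.Ioi 0) := by
        rw [← Set.Ioi_insert, nhdsWithin_insert]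
      have htd : Tendsto (derivWithin (Nfun₀ P) (Set.Ici 0))
          (nhdsWithin 0 (Set.Ici 0)) (nhds L) := by
        rw [hnhds, tendsto_sup]
        constructor
        · refine tendsto_pure_left.mpr fun s hs => ?_
          rw [hdW0]
          exact mem_of_mem_nhds hs
        · exact Tendsto.congr' (eventually_of_mem self_mem_nhdsWithin
            (fun y hy => (hdWpos y hy).symm)) hLtend
      have hgoal : Tendsto (derivWithin (Nfun₀ P) (Set.Ici 0)) (nhdsWithin 0 (Set.Ici 0))
          (nhds (derivWithin (Nfun₀ P) (Set.Ici 0) 0)) := by rw [hdW0]; exact htd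
      exact hgoal
    · have hc : ContinuousAt (derivWithin (Nfun₀ P) (Set.Ici 0)) x := by
        apply ContinuousAt.congr (hN'contOn.continuousAt (Ioi_mem_nhds h))
        apply eventually_of_mem (Ioi_mem_nhds h)
        intro y hy
        exact (hdWpos y hy).symm
      exact hc.continuousWithinAt
  have hC1N₀ : ContDiffOn ℝ 1 (Nfun₀ P) (Set.Ici 0) := by
    rw [← zero_add (1 : WithTop ℕ∞), contDiffOn_succ_iff_derivWithin (uniqueDiffOn_Ici 0)]
    exact ⟨hN₀diff, by simp, contDiffOn_zero.mpr hdWcont⟩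

  have hN₀cont : ContinuousOn (Nfun₀ P) (Set.Ici 0) := hC1N₀.continuousOn
  have hPub : ∀ s : ℝ, 0 < s → P s ≤ s/2 + c₂^2/8 := by
    intro s hs
    have hq : 0 < P s := hPpos s hs
    have h1 := hPinv (P s) hq s hs.le rfl
    have h2 : Real.sqrt (P s) ^ 2 = P s := Real.sq_sqrt hq.le
    have h3 : c₂ * Real.sqrt (P s) ≤ P s + c₂^2/4 := by
      nlinarith [sq_nonneg (Real.sqrt (P s) - c₂/2)]
    have h4 := (abs_le.mp h1).1
    linarith
  set s₀ : ℝ := max 1 (c₂^2/4) with hs₀def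
  have hs₀pos : 0 < s₀ := lt_of_lt_of_le one_pos (le_max_left _ _)
  have hfge2 : ∀ s : ℝ, s₀ ≤ s → (2*s)⁻¹ ≤ f s := by
    intro s hss
    have hs : 0 < s := lt_of_lt_of_le hs₀pos hss
    have h1 : s + P s ≤ 2*s := by
      have := hPub s hs
      have h2 : c₂^2/4 ≤ s := le_trans (le_max_right 1 _) hss
      linarith
    exact inv_anti₀ (hgpos s hs) h1
  have hFlb : ∀ ρ : ℝ, s₀ ≤ ρ → F s₀ + (Real.log ρ - Real.log s₀)/2 ≤ F ρ := by
    intro ρ hρ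
    have hρ0 : 0 < ρ := lt_of_lt_of_le hs₀pos hρ
    have hint1 : IntervalIntegrable (fun s : ℝ => (2*s)⁻¹) volume s₀ ρ := by
      apply ContinuousOn.intervalIntegrable
      apply ContinuousOn.mono _ (Set.ordConnected_Ioi.uIcc_subset
        (Set.mem_Ioi.mpr hs₀pos) (Set.mem_Ioi.mpr hρ0))
      exact ((continuous_const.mul continuous_id).continuousOn).inv₀
        (fun x hx => (mul_pos two_pos (Set.mem_Ioi.1 hx)).ne')
    have hmono : ∫ s in s₀..ρ, (2*s)⁻¹ ≤ ∫ s in s₀..ρ, f s :=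
      intervalIntegral.integral_mono_on hρ hint1 (hfint s₀ ρ hs₀pos hρ0)
        (fun x hx => hfge2 x hx.1)
    have hval : ∫ s in s₀..ρ, (2*s)⁻¹ = (Real.log ρ - Real.log s₀)/2 := by
      have hrw : ∀ s : ℝ, (2*s)⁻¹ = (1/2) * s⁻¹ := by
        intro s; rw [mul_inv]; ring
      simp_rw [hrw]
      rw [intervalIntegral.integral_const_mul,
        integral_inv (Set.notMem_uIcc_of_lt hs₀pos hρ0),
        Real.log_div hρ0.ne' hs₀pos.ne']
      ring
    have h3 : ∫ s in s₀..ρ, f s = F ρ - F s₀ :=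
      (intervalIntegral.integral_interval_sub_left (hfint 1 ρ one_pos hρ0)
        (hfint 1 s₀ one_pos hs₀pos)).symm
    rw [hval, h3] at hmono
    linarith
  have hFtop : Tendsto F atTop atTop := by
    have h1 : Tendsto (fun ρ : ℝ => F s₀ + (Real.log ρ - Real.log s₀)/2) atTop atTop := by
      apply tendsto_atTop_add_const_left
      apply Tendsto.atTop_div_const two_pos
      have := tendsto_atTop_add_const_right atTop (-(Real.log s₀)) Real.tendsto_log_atTop
      simpa [sub_eq_add_neg] using this
    apply tendsto_atTop_mono' atTop _ h1
    filter_upwards [eventually_ge_atTop s₀] with ρ hρ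
    exact hFlb ρ hρ
  have hNtop : Tendsto (Nfun P) atTop atTop := by
    rw [hNF]
    exact Real.tendsto_exp_atTop.comp hFtop
  have hNsm : StrictMonoOn (Nfun P) (Set.Ioi 0) := by
    apply strictMonoOn_of_deriv_pos (convex_Ioi 0) hNcontOn
    intro x hx; rw [interior_Ioi] at hx; exact hN'pos x hx
  have hN₀sm : StrictMonoOn (Nfun₀ P) (Set.Ici 0) := by
    intro a ha b hb hab
    rcases eq_or_lt_of_le (Set.mem_Ici.1 ha) with h | h
    · have hb0 : 0 < b := by rw [← h] at hab; exact hab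
      rw [← h, hN₀0, hN₀pos b hb0]
      exact hNpos b
    · rw [hN₀pos a h, hN₀pos b (h.trans hab)]
      exact hNsm h (h.trans hab) hab
  have hN₀maps : ∀ x ∈ Set.Ici (0:ℝ), Nfun₀ P x ∈ Set.Ici (0:ℝ) := by
    intro x hx
    rcases eq_or_lt_of_le (Set.mem_Ici.1 hx) with h | h
    · rw [← h, hN₀0]; exact Set.self_mem_Ici
    · rw [hN₀pos x h]; exact (hNpos x).le
  have hN₀top : Tendsto (Nfun₀ P) atTop atTop := by
    apply hNtop.congr'
    filter_upwards [eventually_gt_atTop 0] with x hx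
    exact (hN₀pos x hx).symm
  have hsurj : Set.SurjOn (Nfun₀ P) (Set.Ici 0) (Set.Ici 0) := by
    intro y hy
    rcases eq_or_lt_of_le (Set.mem_Ici.1 hy) with h | h
    · exact ⟨0, Set.self_mem_Ici, by rw [hN₀0, h]⟩
    · obtain ⟨b, hb⟩ := ((hN₀top.eventually_ge_atTop y).and (eventually_ge_atTop 0)).exists
      have hyIcc : y ∈ Set.Icc (Nfun₀ P 0) (Nfun₀ P b) := ⟨by rw [hN₀0]; exact h.le, hb.1⟩
      obtain ⟨x, hx, hxy⟩ := intermediate_value_Icc hb.2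
        (hN₀cont.mono Set.Icc_subset_Ici_self) hyIcc
      exact ⟨x, Set.Icc_subset_Ici_self hx, hxy⟩
  have hbij : Set.BijOn (Nfun₀ P) (Set.Ici 0) (Set.Ici 0) :=
    ⟨hN₀maps, hN₀sm.injOn, hsurj⟩
  refine ⟨hTend0, hN₀cont, hC2, ?_, hSA, ⟨L, hLpos, hLtend⟩, hC1N₀, hNtop, hN₀sm, hbij⟩
  intro ρ hρ
  exact ⟨hN'eq ρ hρ, hN'pos ρ hρ, (hN2At ρ hρ).deriv, hN2neg ρ hρ⟩

end
end
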